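/- Let f(c, x) = c_m x^m + ⋯ + c₀ be a univariate polynomial whose coefficients c = (c₀,…,c_m) are real parameters, and let R(c) = Res(f, ∂f/∂x, x) (the resultant in x). If s₁ and s₂ lie in the same connected component of the set {c : R(c) ≠ 0}, then f(s₁, x) and f(s₂, x) have the same number of distinct real roots. -/

import Mathlib

open Polynomial

/-- The Sylvester matrix of `p` (regarded as of degree `m`) and `q` (of degree `n`). -/
noncomputable def sylvesterMatrix {R : Type*} [CommRing R] (m n : ℕ) (p q : R[X]) :
    Matrix (Fin (n + m)) (Fin (n + m)) R :=
  Matrix.of fun i j =>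
    if (i : ℕ) < n then
      (if (i : ℕ) ≤ (j : ℕ) ∧ (j : ℕ) ≤ (i : ℕ) + m then p.coeff (m + i - j) else 0)
    else
      (if (i : ℕ) - n ≤ (j : ℕ) ∧ (j : ℕ) ≤ ((i : ℕ) - n) + n then
        q.coeff (n + ((i : ℕ) - n) - j) else 0)

/-- The resultant of `p` (of degree `m`) and `q` (of degree `n`). -/
noncomputable def resultant {R : Type*} [CommRing R] (m n : ℕ) (p q : R[X]) : R :=
  (sylvesterMatrix m n p q).det

/-- The polynomial `f(c,x) = c_m x^m + ⋯ + c₀` with parametric coefficients `c`. -/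
noncomputable def paramPoly (m : ℕ) (c : Fin (m + 1) → ℝ) : Polynomial ℝ :=
  ∑ i : Fin (m + 1), Polynomial.C (c i) * Polynomial.X ^ (i : ℕ)

/-- `R(c) = Res(f, ∂f/∂x, x)` as a function of the parameters `c`. -/
noncomputable def paramRes (m : ℕ) (c : Fin (m + 1) → ℝ) : ℝ :=
  resultant m (m - 1) (paramPoly m c) (Polynomial.derivative (paramPoly m c))

namespace Aux14

lemma paramPoly_coeff (m : ℕ) (c : Fin (m + 1) → ℝ) (k : ℕ) :
    (paramPoly m c).coeff k = if h : k < m + 1 then c ⟨k, h⟩ else 0 := by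
  rw [paramPoly, Polynomial.finset_sum_coeff]
  simp only [Polynomial.coeff_C_mul, Polynomial.coeff_X_pow, mul_ite, mul_one, mul_zero]
  split_ifs with h
  · rw [Finset.sum_eq_single (⟨k, h⟩ : Fin (m + 1))]
    · simp
    · intro b _ hb
      simp only [ite_eq_right_iff]
      intro hk
      exact absurd (Fin.ext hk.symm : b = ⟨k, h⟩) hb
    · simp
  · apply Finset.sum_eq_zero
    intro i _
    simp only [ite_eq_right_iff]
    intro hk
    exact absurd (hk ▸ i.isLt) h

lemma paramPoly_coeff_fin (m : ℕ) (c : Fin (m + 1) → ℝ) (i : Fin (m + 1)) :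
    (paramPoly m c).coeff i = c i := by
  rw [paramPoly_coeff, dif_pos i.isLt]

lemma paramPoly_natDegree_le (m : ℕ) (c : Fin (m + 1) → ℝ) :
    (paramPoly m c).natDegree ≤ m := by
  apply Polynomial.natDegree_le_iff_coeff_eq_zero.2
  intro k hk
  rw [paramPoly_coeff, dif_neg (by omega)]

lemma paramPoly_natDegree (m : ℕ) (c : Fin (m + 1) → ℝ)
    (hc : c (Fin.last m) ≠ 0) : (paramPoly m c).natDegree = m := by
  apply le_antisymm (paramPoly_natDegree_le m c)
  apply Polynomial.le_natDegree_of_ne_zero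
  have : (paramPoly m c).coeff m = c (Fin.last m) := paramPoly_coeff_fin m c (Fin.last m)
  rw [this]
  exact hc

lemma paramPoly_ne_zero (m : ℕ) (c : Fin (m + 1) → ℝ) (hc : c (Fin.last m) ≠ 0) :
    paramPoly m c ≠ 0 := by
  intro h
  apply hc
  have := paramPoly_coeff_fin m c (Fin.last m)
  rw [h] at this
  simpa using this.symm

/-- The complexified parametric polynomial. -/
noncomputable def cPoly (m : ℕ) (c : Fin (m + 1) → ℝ) : Polynomial ℂ :=
  (paramPoly m c).map (algebraMap ℝ ℂ)

lemma cPoly_coeff (m : ℕ) (c : Fin (m + 1) → ℝ) (k : ℕ) :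
    (cPoly m c).coeff k = if h : k < m + 1 then (c ⟨k, h⟩ : ℂ) else 0 := by
  rw [cPoly, Polynomial.coeff_map, paramPoly_coeff]
  split_ifs <;> simp

lemma cPoly_eval (m : ℕ) (c : Fin (m + 1) → ℝ) (z : ℂ) :
    (cPoly m c).eval z = ∑ i : Fin (m + 1), (c i : ℂ) * z ^ (i : ℕ) := by
  rw [cPoly, paramPoly, Polynomial.map_sum]
  simp [Polynomial.eval_finset_sum]

lemma cPoly_eval_conj (m : ℕ) (c : Fin (m + 1) → ℝ) (z : ℂ) :
    (cPoly m c).eval ((starRingEnd ℂ) z) = (starRingEnd ℂ) ((cPoly m c).eval z) := by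
  rw [cPoly_eval, cPoly_eval, map_sum]
  congr 1
  ext i
  rw [map_mul, map_pow, Complex.conj_ofReal]

lemma cPoly_natDegree (m : ℕ) (c : Fin (m + 1) → ℝ) (hc : c (Fin.last m) ≠ 0) :
    (cPoly m c).natDegree = m := by
  have h := paramPoly_natDegree m c hc
  have h2 : (Polynomial.map (algebraMap ℝ ℂ) (paramPoly m c)).natDegree
      = (paramPoly m c).natDegree := by
    apply Polynomial.natDegree_map_eq_iff.2
    left
    rw [Polynomial.leadingCoeff, h]
    have : (paramPoly m c).coeff m = c (Fin.last m) := paramPoly_coeff_fin m c (Fin.last m)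
    rw [this]
    simpa using hc
  rw [cPoly, h2, h]

lemma cPoly_ne_zero (m : ℕ) (c : Fin (m + 1) → ℝ) (hc : c (Fin.last m) ≠ 0) :
    cPoly m c ≠ 0 := by
  rw [cPoly, Ne, Polynomial.map_eq_zero_iff (algebraMap ℝ ℂ).injective]
  exact paramPoly_ne_zero m c hc

lemma cPoly_leadingCoeff (m : ℕ) (c : Fin (m + 1) → ℝ) (hc : c (Fin.last m) ≠ 0) :
    (cPoly m c).leadingCoeff = (c (Fin.last m) : ℂ) := by
  rw [Polynomial.leadingCoeff, cPoly_natDegree m c hc, cPoly_coeff,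
    dif_pos (Nat.lt_succ_self m)]
  rfl

end Aux14

namespace Aux14

lemma row_sum (p : Polynomial ℝ) (M N T : ℕ) (hp : p.natDegree ≤ M) (hT : T = M + N)
    (i : ℕ) (hi : i < N) (z : ℂ) :
    ∑ j ∈ Finset.range T,
      (if i ≤ j ∧ j ≤ i + M then ((algebraMap ℝ ℂ) (p.coeff (M + i - j))) else 0) * z ^ (T - 1 - j)
    = z ^ (N - 1 - i) * Polynomial.aeval z p := by
  subst hT
  have h1 : ∀ j : ℕ, (if i ≤ j ∧ j ≤ i + M then ((algebraMap ℝ ℂ) (p.coeff (M + i - j))) else 0)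
      * z ^ (M + N - 1 - j)
      = if i ≤ j ∧ j ≤ i + M then ((algebraMap ℝ ℂ) (p.coeff (M + i - j))) * z ^ (M + N - 1 - j)
        else 0 := by
    intro j; split_ifs <;> simp
  simp only [h1]
  rw [← Finset.sum_filter]
  have h2 : (Finset.range (M + N)).filter (fun j => i ≤ j ∧ j ≤ i + M) = Finset.Icc i (i + M) := by
    ext j
    simp only [Finset.mem_filter, Finset.mem_range, Finset.mem_Icc]
    omega
  rw [h2, ← Finset.Ico_add_one_right_eq_Icc, Finset.sum_Ico_eq_sum_range]
  have h3 : i + M + 1 - i = M + 1 := by omega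
  rw [h3]
  rw [← Finset.sum_range_reflect]
  rw [Polynomial.aeval_def, Polynomial.eval₂_eq_sum_range' (algebraMap ℝ ℂ) (Nat.lt_succ_of_le hp) z,
    Finset.mul_sum]
  apply Finset.sum_congr rfl
  intro k hk
  rw [Finset.mem_range] at hk
  have e1 : M + i - (i + (M + 1 - 1 - k)) = k := by omega
  have e2 : M + N - 1 - (i + (M + 1 - 1 - k)) = (N - 1 - i) + k := by omega
  rw [e1, e2, pow_add]
  ring

lemma derivative_natDegree_le (m : ℕ) (c : Fin (m + 1) → ℝ) :
    (Polynomial.derivative (paramPoly m c)).natDegree ≤ m - 1 :=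
  le_trans (Polynomial.natDegree_derivative_le _)
    (Nat.sub_le_sub_right (paramPoly_natDegree_le m c) 1)

lemma res_eq_zero_of_common_root (m : ℕ) (hm : 1 ≤ m) (c : Fin (m + 1) → ℝ) (z : ℂ)
    (hf : Polynomial.aeval z (paramPoly m c) = 0)
    (hf' : Polynomial.aeval z (Polynomial.derivative (paramPoly m c)) = 0) :
    paramRes m c = 0 := by
  set n := m - 1
  set p := paramPoly m c
  set q := Polynomial.derivative (paramPoly m c)
  have key : ((algebraMap ℝ ℂ) (paramRes m c)) = 0 := by
    rw [paramRes, _root_.resultant, RingHom.map_det]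
    rw [← Matrix.exists_mulVec_eq_zero_iff]
    refine ⟨fun j => z ^ (n + m - 1 - (j : ℕ)), ?_, ?_⟩
    · intro hv
      have := congrFun hv ⟨n + m - 1, by omega⟩
      simp only [Pi.zero_apply] at this
      rw [show n + m - 1 - (n + m - 1) = 0 by omega, pow_zero] at this
      exact one_ne_zero this
    · funext i
      simp only [Pi.zero_apply]
      rw [Matrix.mulVec, dotProduct]
      simp only [RingHom.mapMatrix_apply, Matrix.map_apply, sylvesterMatrix, Matrix.of_apply]
      rw [Fin.sum_univ_eq_sum_range
        (fun j => (algebraMap ℝ ℂ) (if (i:ℕ) < n then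
            (if (i:ℕ) ≤ j ∧ j ≤ (i:ℕ) + m then p.coeff (m + i - j) else 0)
          else
            (if (i:ℕ) - n ≤ j ∧ j ≤ ((i:ℕ) - n) + n then q.coeff (n + ((i:ℕ) - n) - j) else 0))
          * z ^ (n + m - 1 - j))]
      by_cases hi : (i : ℕ) < n
      · simp only [if_pos hi]
        have hrs := row_sum p m n (n + m) (paramPoly_natDegree_le m c) (by omega) i hi z
        simp only [apply_ite (algebraMap ℝ ℂ), map_zero]
        rw [hrs, hf, mul_zero]
      · simp only [if_neg hi]
        have hr : (i : ℕ) - n < m := by have := i.isLt; omega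
        have hrs := row_sum q n m (n + m) (derivative_natDegree_le m c) (by omega) ((i : ℕ) - n) hr z
        simp only [apply_ite (algebraMap ℝ ℂ), map_zero]
        rw [hrs, hf', mul_zero]
  have : (paramRes m c : ℂ) = 0 := key
  exact_mod_cast this

lemma res_eq_zero_of_leading_eq_zero (m : ℕ) (hm : 1 ≤ m) (c : Fin (m + 1) → ℝ)
    (hc : c (Fin.last m) = 0) : paramRes m c = 0 := by
  have hcm : (paramPoly m c).coeff m = 0 := by
    rw [show (paramPoly m c).coeff m = c (Fin.last m) from paramPoly_coeff_fin m c (Fin.last m), hc]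
  have hpos : 0 < (m - 1) + m := by omega
  apply Matrix.det_eq_zero_of_column_eq_zero (⟨0, hpos⟩ : Fin ((m - 1) + m))
  intro i
  have hj : ((⟨0, hpos⟩ : Fin ((m - 1) + m)) : ℕ) = 0 := rfl
  simp only [sylvesterMatrix, Matrix.of_apply, hj]
  by_cases hi : (i : ℕ) < m - 1
  · rw [if_pos hi]
    by_cases h0 : (i : ℕ) = 0
    · rw [if_pos (by omega), show m + (i:ℕ) - 0 = m by omega, hcm]
    · rw [if_neg (by omega)]
  · rw [if_neg hi]
    by_cases h0 : (i : ℕ) = m - 1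
    · rw [if_pos (by omega)]
      rw [show (m - 1) + ((i:ℕ) - (m-1)) - 0 = m - 1 by omega]
      rw [Polynomial.coeff_derivative, show m - 1 + 1 = m by omega, hcm, zero_mul]
    · rw [if_neg (by omega)]

lemma leading_ne_zero_of_res (m : ℕ) (hm : 1 ≤ m) (c : Fin (m + 1) → ℝ)
    (h : paramRes m c ≠ 0) : c (Fin.last m) ≠ 0 :=
  fun hc => h (res_eq_zero_of_leading_eq_zero m hm c hc)

end Aux14

namespace Aux14

lemma cPoly_eval_ofReal (m : ℕ) (c : Fin (m + 1) → ℝ) (x : ℝ) :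
    (cPoly m c).eval (x : ℂ) = Complex.ofReal ((paramPoly m c).eval x) := by
  rw [cPoly, Polynomial.eval_map]
  have h := Polynomial.eval₂_at_apply (p := paramPoly m c) (algebraMap ℝ ℂ) x
  have hx : (algebraMap ℝ ℂ) x = (x : ℂ) := rfl
  rw [hx] at h
  rw [h]
  rfl

lemma roots_nodup (m : ℕ) (hm : 1 ≤ m) (c : Fin (m + 1) → ℝ) (h : paramRes m c ≠ 0) :
    (cPoly m c).roots.Nodup := by
  rw [Multiset.nodup_iff_count_le_one]
  intro z
  by_contra hcnt
  push_neg at hcnt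
  rw [Polynomial.count_roots] at hcnt
  have hd : (Polynomial.derivative (cPoly m c)).IsRoot z := by
    have := Polynomial.isRoot_iterate_derivative_of_lt_rootMultiplicity
      (p := cPoly m c) (t := z) (n := 1) (by omega)
    simpa using this
  have hr : (cPoly m c).IsRoot z := by
    have := Polynomial.isRoot_iterate_derivative_of_lt_rootMultiplicity
      (p := cPoly m c) (t := z) (n := 0) (by omega)
    simpa using this
  apply h
  apply res_eq_zero_of_common_root m hm c z
  · rw [Polynomial.aeval_def, ← Polynomial.eval_map]
    exact hr
  · rw [Polynomial.aeval_def, ← Polynomial.eval_map]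
    have : Polynomial.map (algebraMap ℝ ℂ) (Polynomial.derivative (paramPoly m c))
        = Polynomial.derivative (cPoly m c) := (Polynomial.derivative_map _ _).symm
    rw [this]
    exact hd

lemma roots_card (m : ℕ) (c : Fin (m + 1) → ℝ) (hc : c (Fin.last m) ≠ 0) :
    Multiset.card (cPoly m c).roots = m := by
  rw [Polynomial.splits_iff_card_roots.1 (IsAlgClosed.splits _), cPoly_natDegree m c hc]

lemma roots_conj (m : ℕ) (c : Fin (m + 1) → ℝ) {z : ℂ} (hz : z ∈ (cPoly m c).roots) :
    (starRingEnd ℂ) z ∈ (cPoly m c).roots := by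
  rw [Polynomial.mem_roots'] at hz ⊢
  refine ⟨hz.1, ?_⟩
  have := hz.2
  rw [Polynomial.IsRoot] at this ⊢
  rw [cPoly_eval_conj, this, map_zero]

lemma multiset_prod_le (s : Multiset ℂ) (δ : ℝ) (hδ : 0 ≤ δ) (g : ℂ → ℝ)
    (h : ∀ x ∈ s, δ ≤ g x) : δ ^ Multiset.card s ≤ (s.map g).prod := by
  induction s using Multiset.induction_on with
  | empty => simp
  | cons a t ih =>
    simp only [Multiset.map_cons, Multiset.prod_cons, Multiset.card_cons, pow_succ]
    have h1 : δ ^ Multiset.card t ≤ (t.map g).prod := ih (fun x hx => h x (Multiset.mem_cons_of_mem hx))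
    have h2 : δ ≤ g a := h a (Multiset.mem_cons_self a t)
    calc δ ^ Multiset.card t * δ ≤ (t.map g).prod * g a :=
          mul_le_mul h1 h2 hδ (le_trans (pow_nonneg hδ _) h1)
      _ = g a * (t.map g).prod := mul_comm _ _

lemma eval_lower_bound (P : Polynomial ℂ) (z : ℂ) (δ : ℝ) (hδ : 0 ≤ δ)
    (h : ∀ b ∈ P.roots, δ ≤ dist z b) :
    ‖P.leadingCoeff‖ * δ ^ Multiset.card P.roots ≤ ‖P.eval z‖ := by
  have hfac := (IsAlgClosed.splits P).eq_prod_roots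
  have heval : P.eval z = P.leadingCoeff * (P.roots.map (fun a => z - a)).prod := by
    conv_lhs => rw [hfac]
    rw [Polynomial.eval_mul, Polynomial.eval_C, Polynomial.eval_multiset_prod,
      Multiset.map_map]
    congr 2
    apply Multiset.map_congr rfl
    intro a _
    simp
  rw [heval, norm_mul]
  apply mul_le_mul_of_nonneg_left _ (norm_nonneg _)
  have : ‖(P.roots.map (fun a => z - a)).prod‖ = ((P.roots.map (fun a => z - a)).map norm).prod := by
    induction (P.roots.map (fun a => z - a)) using Multiset.induction_on with
    | empty => simp
    | cons a t ih => simp [norm_mul, ih]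
  rw [this, Multiset.map_map]
  have := multiset_prod_le P.roots δ hδ (fun a => ‖z - a‖) (fun a ha => by
    show δ ≤ ‖z - a‖
    rw [← dist_eq_norm]; exact h a ha)
  simpa using this

lemma root_norm_le (m : ℕ) (hm : 1 ≤ m) (c : Fin (m + 1) → ℝ) (hc : c (Fin.last m) ≠ 0)
    {z : ℂ} (hz : (cPoly m c).eval z = 0) :
    ‖z‖ ≤ 1 + (∑ i, |c i|) / |c (Fin.last m)| := by
  have hpos : 0 < |c (Fin.last m)| := abs_pos.2 hc
  have hdiv : (0:ℝ) ≤ (∑ i, |c i|) / |c (Fin.last m)| := by positivity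
  rcases le_or_gt ‖z‖ 1 with h1 | h1
  · linarith
  have hsum := cPoly_eval (m := m) c z
  rw [hz] at hsum
  rw [Fin.sum_univ_castSucc] at hsum
  have hlast : (c (Fin.last m) : ℂ) * z ^ m = -∑ i : Fin m, (c i.castSucc : ℂ) * z ^ (i : ℕ) := by
    rw [eq_neg_iff_add_eq_zero]
    rw [add_comm]
    simpa using hsum.symm
  have hnorm : |c (Fin.last m)| * ‖z‖ ^ m ≤ (∑ i : Fin m, |c i.castSucc|) * ‖z‖ ^ (m - 1) := by
    calc |c (Fin.last m)| * ‖z‖ ^ m = ‖(c (Fin.last m) : ℂ) * z ^ m‖ := by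
          rw [norm_mul, norm_pow, Complex.norm_real, Real.norm_eq_abs]
      _ = ‖∑ i : Fin m, (c i.castSucc : ℂ) * z ^ (i : ℕ)‖ := by rw [hlast, norm_neg]
      _ ≤ ∑ i : Fin m, ‖(c i.castSucc : ℂ) * z ^ (i : ℕ)‖ := norm_sum_le _ _
      _ ≤ ∑ i : Fin m, |c i.castSucc| * ‖z‖ ^ (m - 1) := by
          apply Finset.sum_le_sum
          intro i _
          rw [norm_mul, norm_pow, Complex.norm_real, Real.norm_eq_abs]
          apply mul_le_mul_of_nonneg_left _ (abs_nonneg _)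
          exact pow_le_pow_right₀ (le_of_lt h1) (by omega)
      _ = (∑ i : Fin m, |c i.castSucc|) * ‖z‖ ^ (m - 1) := by rw [Finset.sum_mul]
  have hzpow : (0:ℝ) < ‖z‖ ^ (m - 1) := pow_pos (lt_trans one_pos h1) _
  have hm' : m = (m - 1) + 1 := by omega
  have hpow : ‖z‖ ^ m = ‖z‖ ^ (m - 1) * ‖z‖ := by
    conv_lhs => rw [hm']
    rw [pow_succ]
  rw [hpow] at hnorm
  have hkey : |c (Fin.last m)| * ‖z‖ ≤ ∑ i : Fin m, |c i.castSucc| := by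
    nlinarith [hnorm, hzpow]
  have hsum_le : ∑ i : Fin m, |c i.castSucc| ≤ ∑ i, |c i| := by
    rw [Fin.sum_univ_castSucc (f := fun i => |c i|)]
    have : (0:ℝ) ≤ |c (Fin.last m)| := abs_nonneg _
    linarith
  have : ‖z‖ ≤ (∑ i, |c i|) / |c (Fin.last m)| := by
    rw [le_div_iff₀ hpos]
    calc ‖z‖ * |c (Fin.last m)| = |c (Fin.last m)| * ‖z‖ := mul_comm _ _
      _ ≤ ∑ i : Fin m, |c i.castSucc| := hkey
      _ ≤ ∑ i, |c i| := hsum_le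
  linarith

lemma card_real_roots (m : ℕ) (c : Fin (m + 1) → ℝ) (h0 : paramPoly m c ≠ 0) :
    (paramPoly m c).roots.toFinset.card
      = ((cPoly m c).roots.toFinset.filter (fun z => z.im = 0)).card := by
  have hC0 : cPoly m c ≠ 0 := by
    rw [cPoly, Ne, Polynomial.map_eq_zero_iff (algebraMap ℝ ℂ).injective]
    exact h0
  refine Finset.card_bij (fun x _ => (x : ℂ)) ?_ ?_ ?_
  · intro x hx
    rw [Multiset.mem_toFinset, Polynomial.mem_roots'] at hx
    show ((x : ℂ)) ∈ _
    rw [Finset.mem_filter, Multiset.mem_toFinset, Polynomial.mem_roots']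
    refine ⟨⟨hC0, ?_⟩, by simp⟩
    rw [Polynomial.IsRoot, cPoly_eval_ofReal, hx.2.eq_zero, Complex.ofReal_zero]
  · intro x₁ h₁ x₂ h₂ h
    have h' : (x₁ : ℂ) = (x₂ : ℂ) := h
    exact_mod_cast h'
  · intro z hz
    rw [Finset.mem_filter, Multiset.mem_toFinset, Polynomial.mem_roots'] at hz
    obtain ⟨⟨_, hroot⟩, him⟩ := hz
    have hzre : (z.re : ℂ) = z := Complex.ext (by simp) (by simp [him])
    refine ⟨z.re, ?_, hzre⟩
    rw [Multiset.mem_toFinset, Polynomial.mem_roots']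
    refine ⟨h0, ?_⟩
    have : Complex.ofReal ((paramPoly m c).eval z.re) = 0 := by
      rw [← cPoly_eval_ofReal, hzre]
      exact hroot.eq_zero
    rw [Polynomial.IsRoot]
    exact_mod_cast this

end Aux14

namespace Aux14

lemma matching (A B : Finset ℂ) (δ : ℝ)
    (hcard : A.card = B.card)
    (hsep : ∀ a ∈ A, ∀ a' ∈ A, a ≠ a' → 2 * δ ≤ dist a a')
    (hBA : ∀ b ∈ B, ∃ a, a ∈ A ∧ dist b a < δ)
    (hAB : ∀ a ∈ A, ∃ b, b ∈ B ∧ dist a b < δ)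
    (hAc : ∀ a ∈ A, (starRingEnd ℂ) a ∈ A)
    (hBc : ∀ b ∈ B, (starRingEnd ℂ) b ∈ B) :
    (A.filter (fun z => z.im = 0)).card = (B.filter (fun z => z.im = 0)).card := by
  classical
  set ψ : ℂ → ℂ := fun b => if h : ∃ a, a ∈ A ∧ dist b a < δ then h.choose else 0 with hψ
  have hspec : ∀ b : ℂ, (∃ a, a ∈ A ∧ dist b a < δ) → ψ b ∈ A ∧ dist b (ψ b) < δ := by
    intro b hb
    rw [hψ]
    simp only [dif_pos hb]
    exact hb.choose_spec
  have huniq : ∀ b : ℂ, ∀ a, a ∈ A → dist b a < δ → ψ b = a := by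
    intro b a ha hd
    obtain ⟨h1, h2⟩ := hspec b ⟨a, ha, hd⟩
    by_contra hne
    have ht : dist (ψ b) a ≤ dist (ψ b) b + dist b a := dist_triangle _ _ _
    rw [dist_comm (ψ b) b] at ht
    linarith [hsep _ h1 _ ha hne]
  have hmem : ∀ b ∈ B, ψ b ∈ A := fun b hb => (hspec b (hBA b hb)).1
  have hsurj : ∀ a ∈ A, ∃ b, ∃ _ : b ∈ B, ψ b = a := by
    intro a ha
    obtain ⟨b, hb, hd⟩ := hAB a ha
    exact ⟨b, hb, huniq b a ha (by rwa [dist_comm])⟩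
  have hinj := Finset.inj_on_of_surj_on_of_card_le (s := B) (t := A)
    (fun b _ => ψ b) (fun b hb => hmem b hb) hsurj (le_of_eq hcard.symm)
  have hconj : ∀ b ∈ B, ψ ((starRingEnd ℂ) b) = (starRingEnd ℂ) (ψ b) := by
    intro b hb
    apply huniq
    · exact hAc _ (hmem b hb)
    · rw [Complex.dist_conj_conj]
      exact (hspec b (hBA b hb)).2
  have hreal : ∀ b ∈ B, (b.im = 0 ↔ (ψ b).im = 0) := by
    intro b hb
    constructor
    · intro him
      have hcb : (starRingEnd ℂ) b = b := Complex.conj_eq_iff_im.2 him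
      have : (starRingEnd ℂ) (ψ b) = ψ b := by
        rw [← hconj b hb, hcb]
      exact Complex.conj_eq_iff_im.1 this
    · intro him
      have : ψ ((starRingEnd ℂ) b) = ψ b := by
        rw [hconj b hb]
        exact Complex.conj_eq_iff_im.2 him
      have hcb := hinj (hBc b hb) hb this
      exact Complex.conj_eq_iff_im.1 hcb
  symm
  refine Finset.card_bij (fun b _ => ψ b) ?_ ?_ ?_
  · intro b hb
    rw [Finset.mem_filter] at hb
    rw [Finset.mem_filter]
    exact ⟨hmem b hb.1, (hreal b hb.1).1 hb.2⟩
  · intro b₁ h₁ b₂ h₂ h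
    rw [Finset.mem_filter] at h₁ h₂
    exact hinj h₁.1 h₂.1 h
  · intro a ha
    rw [Finset.mem_filter] at ha
    obtain ⟨b, hb, hba⟩ := hsurj a ha.1
    refine ⟨b, ?_, hba⟩
    rw [Finset.mem_filter]
    refine ⟨hb, ?_⟩
    apply (hreal b hb).2
    rw [hba]
    exact ha.2
end Aux14

namespace Aux14

lemma eval_diff_le (m : ℕ) (c c₀ : Fin (m + 1) → ℝ) (z : ℂ) :
    ‖(cPoly m c).eval z - (cPoly m c₀).eval z‖
      ≤ dist c c₀ * ∑ i : Fin (m + 1), ‖z‖ ^ (i : ℕ) := by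
  rw [cPoly_eval, cPoly_eval, ← Finset.sum_sub_distrib]
  calc ‖∑ i : Fin (m+1), ((c i : ℂ) * z ^ (i:ℕ) - (c₀ i : ℂ) * z ^ (i:ℕ))‖
      ≤ ∑ i : Fin (m+1), ‖((c i : ℂ) - (c₀ i : ℂ)) * z ^ (i:ℕ)‖ := by
        refine le_trans (le_of_eq (congrArg _ (Finset.sum_congr rfl fun i _ => by ring)))
          (norm_sum_le _ _)
    _ ≤ ∑ i : Fin (m+1), dist c c₀ * ‖z‖ ^ (i:ℕ) := by
        apply Finset.sum_le_sum
        intro i _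
        rw [norm_mul, norm_pow]
        apply mul_le_mul_of_nonneg_right _ (pow_nonneg (norm_nonneg _) _)
        have h1 : ((c i : ℂ) - (c₀ i : ℂ)) = ((c i - c₀ i : ℝ) : ℂ) := by push_cast; ring
        rw [h1, Complex.norm_real, Real.norm_eq_abs, ← Real.dist_eq]
        exact dist_le_pi_dist c c₀ i
    _ = dist c c₀ * ∑ i : Fin (m+1), ‖z‖ ^ (i:ℕ) := by rw [Finset.mul_sum]

lemma exists_sep (A : Finset ℂ) :
    ∃ δ : ℝ, 0 < δ ∧ ∀ a ∈ A, ∀ a' ∈ A, a ≠ a' → 2 * δ ≤ dist a a' := by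
  classical
  rcases ((A ×ˢ A).filter (fun p => p.1 ≠ p.2)).eq_empty_or_nonempty with hTe | hTn
  · refine ⟨1, one_pos, fun a ha a' ha' hne => ?_⟩
    exfalso
    have hmem : ((a, a') : ℂ × ℂ) ∈ (A ×ˢ A).filter (fun p => p.1 ≠ p.2) :=
      Finset.mem_filter.2 ⟨Finset.mem_product.2 ⟨ha, ha'⟩, hne⟩
    rw [hTe] at hmem
    exact Finset.notMem_empty _ hmem
  · obtain ⟨p, hp, hmin⟩ := Finset.exists_min_image ((A ×ˢ A).filter (fun p => p.1 ≠ p.2)) (fun p : ℂ × ℂ => dist p.1 p.2) hTn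
    refine ⟨dist p.1 p.2 / 2, ?_, ?_⟩
    · have hne : p.1 ≠ p.2 := (Finset.mem_filter.1 hp).2
      have : 0 < dist p.1 p.2 := dist_pos.2 hne
      linarith
    · intro a ha a' ha' hne
      have hmem : ((a, a') : ℂ × ℂ) ∈ (A ×ˢ A).filter (fun p => p.1 ≠ p.2) :=
        Finset.mem_filter.2 ⟨Finset.mem_product.2 ⟨ha, ha'⟩, hne⟩
      have := hmin _ hmem
      simp only at this
      linarith

set_option maxHeartbeats 1000000 in
lemma local_const (m : ℕ) (hm : 1 ≤ m) (c₀ : Fin (m + 1) → ℝ) (h₀ : paramRes m c₀ ≠ 0) :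
    ∃ ρ > 0, ∀ c : Fin (m + 1) → ℝ, dist c c₀ < ρ → paramRes m c ≠ 0 →
      ((cPoly m c).roots.toFinset.filter (fun z => z.im = 0)).card
        = ((cPoly m c₀).roots.toFinset.filter (fun z => z.im = 0)).card := by
  have hc₀ : c₀ (Fin.last m) ≠ 0 := leading_ne_zero_of_res m hm c₀ h₀
  set L := |c₀ (Fin.last m)| with hLdef
  have hL : 0 < L := abs_pos.2 hc₀
  set A := (cPoly m c₀).roots.toFinset with hA
  have hnodup₀ : (cPoly m c₀).roots.Nodup := roots_nodup m hm c₀ h₀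
  have hcardA : A.card = m := by
    rw [hA, Multiset.toFinset_card_of_nodup hnodup₀, roots_card m c₀ hc₀]
  obtain ⟨δ, hδ, hsep⟩ := exists_sep A
  set Bd : ℝ := 1 + (∑ i, (|c₀ i| + 1)) / (L / 2) with hBddef
  have hBd1 : (1:ℝ) ≤ Bd := by
    rw [hBddef]
    have : 0 ≤ (∑ i, (|c₀ i| + 1)) / (L / 2) := by positivity
    linarith
  set G : ℝ := ∑ i : Fin (m + 1), Bd ^ (i : ℕ) with hGdef
  have hG1 : (1:ℝ) ≤ G := by
    rw [hGdef]
    calc (1:ℝ) = ∑ i : Fin (m+1), if i = 0 then (1:ℝ) else 0 := by simp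
      _ ≤ ∑ i : Fin (m + 1), Bd ^ (i : ℕ) := by
        apply Finset.sum_le_sum
        intro i _
        split_ifs with h
        · subst h
          simp
        · exact pow_nonneg (by linarith) _
  have hG0 : (0:ℝ) < G := lt_of_lt_of_le one_pos hG1
  have hδm : (0:ℝ) < δ ^ m := pow_pos hδ m
  refine ⟨min (min 1 (L / 2)) ((L / 2) * δ ^ m / (2 * G)), ?_, ?_⟩
  · apply lt_min
    · apply lt_min one_pos; linarith
    · positivity
  intro c hdist hres
  have hd1 : dist c c₀ < 1 := lt_of_lt_of_le hdist (le_trans (min_le_left _ _) (min_le_left _ _))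
  have hdL2 : dist c c₀ < L / 2 :=
    lt_of_lt_of_le hdist (le_trans (min_le_left _ _) (min_le_right _ _))
  have hdG : dist c c₀ * G < (L / 2) * δ ^ m / 2 := by
    have h1 : dist c c₀ < (L / 2) * δ ^ m / (2 * G) :=
      lt_of_lt_of_le hdist (min_le_right _ _)
    calc dist c c₀ * G < ((L / 2) * δ ^ m / (2 * G)) * G :=
          mul_lt_mul_of_pos_right h1 hG0
      _ = (L / 2) * δ ^ m / 2 := by field_simp
  have hc : c (Fin.last m) ≠ 0 := leading_ne_zero_of_res m hm c hres
  have hclast : L / 2 ≤ |c (Fin.last m)| := by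
    have h1 : |c (Fin.last m) - c₀ (Fin.last m)| < L / 2 := by
      rw [← Real.dist_eq]
      exact lt_of_le_of_lt (dist_le_pi_dist c c₀ (Fin.last m)) hdL2
    have h2 := abs_sub_abs_le_abs_sub (c₀ (Fin.last m)) (c (Fin.last m))
    rw [abs_sub_comm (c₀ (Fin.last m)) (c (Fin.last m))] at h2
    rw [hLdef]
    linarith
  have hcabs : ∀ i, |c i| ≤ |c₀ i| + 1 := by
    intro i
    have h1 : |c i - c₀ i| < 1 := by
      rw [← Real.dist_eq]
      exact lt_of_le_of_lt (dist_le_pi_dist c c₀ i) hd1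
    have h2 := abs_sub_abs_le_abs_sub (c i) (c₀ i)
    linarith
  have hnum : (∑ i, |c i|) ≤ ∑ i, (|c₀ i| + 1) := Finset.sum_le_sum (fun i _ => hcabs i)
  have hnum₀ : (∑ i, |c₀ i|) ≤ ∑ i, (|c₀ i| + 1) :=
    Finset.sum_le_sum (fun (i : Fin (m+1)) _ => by linarith)
  have hrootc : ∀ z : ℂ, (cPoly m c).eval z = 0 → ‖z‖ ≤ Bd := by
    intro z hz
    have h1 := root_norm_le m hm c hc hz
    have h2 : (∑ i, |c i|) / |c (Fin.last m)| ≤ (∑ i, (|c₀ i| + 1)) / (L / 2) :=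
      div_le_div₀ (Finset.sum_nonneg fun i _ => by positivity) hnum (by linarith) hclast
    rw [hBddef]
    linarith
  have hrootc₀ : ∀ z : ℂ, (cPoly m c₀).eval z = 0 → ‖z‖ ≤ Bd := by
    intro z hz
    have h1 := root_norm_le m hm c₀ hc₀ hz
    have h2 : (∑ i, |c₀ i|) / |c₀ (Fin.last m)| ≤ (∑ i, (|c₀ i| + 1)) / (L / 2) :=
      div_le_div₀ (Finset.sum_nonneg fun i _ => by positivity) hnum₀ (by linarith)
        (by rw [← hLdef]; linarith)
    rw [hBddef]
    linarith
  set B := (cPoly m c).roots.toFinset with hB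
  have hnodup : (cPoly m c).roots.Nodup := roots_nodup m hm c hres
  have hcardB : B.card = m := by
    rw [hB, Multiset.toFinset_card_of_nodup hnodup, roots_card m c hc]
  have hpow_le : ∀ z : ℂ, ‖z‖ ≤ Bd → (∑ i : Fin (m+1), ‖z‖ ^ (i:ℕ)) ≤ G := by
    intro z hz
    rw [hGdef]
    exact Finset.sum_le_sum (fun i _ => pow_le_pow_left₀ (norm_nonneg _) hz _)
  have hlcc₀ : ‖(cPoly m c₀).leadingCoeff‖ = L := by
    rw [cPoly_leadingCoeff m c₀ hc₀, Complex.norm_real, Real.norm_eq_abs, hLdef]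
  have hlcc : ‖(cPoly m c).leadingCoeff‖ = |c (Fin.last m)| := by
    rw [cPoly_leadingCoeff m c hc, Complex.norm_real, Real.norm_eq_abs]
  have hBA : ∀ b ∈ B, ∃ a, a ∈ A ∧ dist b a < δ := by
    intro b hb
    by_contra hcon
    push_neg at hcon
    have hbroot : (cPoly m c).eval b = 0 := by
      rw [hB, Multiset.mem_toFinset, Polynomial.mem_roots'] at hb
      exact hb.2
    have hlow := eval_lower_bound (cPoly m c₀) b δ (le_of_lt hδ)
      (fun r hr => hcon r (by rw [hA, Multiset.mem_toFinset]; exact hr))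
    rw [roots_card m c₀ hc₀, hlcc₀] at hlow
    have hup : ‖(cPoly m c₀).eval b‖ ≤ dist c c₀ * G := by
      have he : ‖(cPoly m c₀).eval b‖ = ‖(cPoly m c).eval b - (cPoly m c₀).eval b‖ := by
        rw [hbroot, zero_sub, norm_neg]
      rw [he]
      exact le_trans (eval_diff_le m c c₀ b)
        (mul_le_mul_of_nonneg_left (hpow_le b (hrootc b hbroot)) dist_nonneg)
    have hgt : (L / 2) * δ ^ m / 2 < L * δ ^ m := by
      have heq : (L / 2) * δ ^ m / 2 = (L * δ ^ m) / 4 := by ring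
      rw [heq]
      linarith [mul_pos hL hδm]
    linarith only [hlow, hup, hdG, hgt]
  have hAB : ∀ a ∈ A, ∃ b, b ∈ B ∧ dist a b < δ := by
    intro a ha
    by_contra hcon
    push_neg at hcon
    have haroot : (cPoly m c₀).eval a = 0 := by
      rw [hA, Multiset.mem_toFinset, Polynomial.mem_roots'] at ha
      exact ha.2
    have hlow := eval_lower_bound (cPoly m c) a δ (le_of_lt hδ)
      (fun r hr => hcon r (by rw [hB, Multiset.mem_toFinset]; exact hr))
    rw [roots_card m c hc, hlcc] at hlow
    have hlow2 : (L / 2) * δ ^ m ≤ ‖(cPoly m c).eval a‖ :=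
      le_trans (mul_le_mul_of_nonneg_right hclast (le_of_lt hδm)) hlow
    have hup : ‖(cPoly m c).eval a‖ ≤ dist c c₀ * G := by
      have he : ‖(cPoly m c).eval a‖ = ‖(cPoly m c).eval a - (cPoly m c₀).eval a‖ := by
        rw [haroot, sub_zero]
      rw [he]
      exact le_trans (eval_diff_le m c c₀ a)
        (mul_le_mul_of_nonneg_left (hpow_le a (hrootc₀ a haroot)) dist_nonneg)
    have hgt : (L / 2) * δ ^ m / 2 < (L / 2) * δ ^ m := by
      have h0 : 0 < (L / 2) * δ ^ m := by
        apply mul_pos _ hδm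
        linarith
      linarith
    linarith only [hlow2, hup, hdG, hgt]
  have hAc : ∀ a ∈ A, (starRingEnd ℂ) a ∈ A := by
    intro a ha
    rw [hA, Multiset.mem_toFinset] at ha ⊢
    exact roots_conj m c₀ ha
  have hBc : ∀ b ∈ B, (starRingEnd ℂ) b ∈ B := by
    intro b hb
    rw [hB, Multiset.mem_toFinset] at hb ⊢
    exact roots_conj m c hb
  exact (matching A B δ (hcardA.trans hcardB.symm) hsep hBA hAB hAc hBc).symm

end Aux14

namespace Aux14

lemma continuous_coeff (m k : ℕ) :
    Continuous fun c : Fin (m + 1) → ℝ => (paramPoly m c).coeff k := by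
  have h : (fun c : Fin (m + 1) → ℝ => (paramPoly m c).coeff k)
      = fun c => if h : k < m + 1 then c ⟨k, h⟩ else 0 :=
    funext fun c => paramPoly_coeff m c k
  rw [h]
  by_cases hk : k < m + 1
  · simp only [dif_pos hk]
    exact continuous_apply _
  · simp only [dif_neg hk]
    exact continuous_const

lemma continuous_dcoeff (m k : ℕ) :
    Continuous fun c : Fin (m + 1) → ℝ => (Polynomial.derivative (paramPoly m c)).coeff k := by
  have h : (fun c : Fin (m + 1) → ℝ => (Polynomial.derivative (paramPoly m c)).coeff k)
      = fun c => (paramPoly m c).coeff (k + 1) * ((k : ℝ) + 1) :=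
    funext fun c => Polynomial.coeff_derivative _ _
  rw [h]
  exact (continuous_coeff m (k + 1)).mul continuous_const

lemma continuous_paramRes (m : ℕ) : Continuous (paramRes m) := by
  unfold paramRes _root_.resultant
  apply Continuous.matrix_det
  apply continuous_matrix
  intro i j
  simp only [sylvesterMatrix, Matrix.of_apply]
  by_cases h1 : (i : ℕ) < m - 1
  · simp only [if_pos h1]
    by_cases h2 : (i : ℕ) ≤ (j : ℕ) ∧ (j : ℕ) ≤ (i : ℕ) + m
    · simp only [if_pos h2]
      exact continuous_coeff m _
    · simp only [if_neg h2]
      exact continuous_const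
  · simp only [if_neg h1]
    by_cases h2 : (i : ℕ) - (m - 1) ≤ (j : ℕ) ∧ (j : ℕ) ≤ ((i : ℕ) - (m - 1)) + (m - 1)
    · simp only [if_pos h2]
      exact continuous_dcoeff m _
    · simp only [if_neg h2]
      exact continuous_const

end Aux14

/-- if `s₁`, `s₂` lie in the same connected component of `{c | R(c) ≠ 0}`,
then `f(s₁,x)` and `f(s₂,x)` have the same number of distinct real roots. -/
theorem stmt_14 (m : ℕ) (s₁ s₂ : Fin (m + 1) → ℝ)
    (h₁ : paramRes m s₁ ≠ 0)
    (h₂ : s₂ ∈ connectedComponentIn {c : Fin (m + 1) → ℝ | paramRes m c ≠ 0} s₁) :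
    (paramPoly m s₁).roots.toFinset.card = (paramPoly m s₂).roots.toFinset.card := by

  rcases Nat.eq_zero_or_pos m with hm0 | hmpos
  · subst hm0
    have hconst : ∀ c : Fin 1 → ℝ, paramPoly 0 c = Polynomial.C (c 0) := by
      intro c
      rw [paramPoly]
      simp
    rw [hconst s₁, hconst s₂, Polynomial.roots_C, Polynomial.roots_C]
  · have hm : 1 ≤ m := hmpos
    set U : Set (Fin (m + 1) → ℝ) := {c | paramRes m c ≠ 0} with hU
    have hUopen : IsOpen U := by
      have : U = (paramRes m) ⁻¹' ({0}ᶜ) := rfl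
      rw [this]
      exact (isOpen_compl_singleton).preimage (Aux14.continuous_paramRes m)
    set N : (Fin (m + 1) → ℝ) → ℕ :=
      fun c => ((Aux14.cPoly m c).roots.toFinset.filter (fun z => z.im = 0)).card with hN
    have hloc : ∀ c ∈ U, ∀ᶠ x in nhds c, x ∈ U → N x = N c := by
      intro c hc
      obtain ⟨ρ, hρ, hball⟩ := Aux14.local_const m hm c hc
      filter_upwards [Metric.ball_mem_nhds c hρ] with x hx hxU
      exact hball x (by rwa [Metric.mem_ball] at hx) hxU
    set S := connectedComponentIn U s₁ with hS
    have hSU : S ⊆ U := connectedComponentIn_subset U s₁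
    have hSpre : IsPreconnected S := isPreconnected_connectedComponentIn
    set u : Set (Fin (m + 1) → ℝ) := {c | ∀ᶠ x in nhds c, x ∈ U ∧ N x = N s₁} with hu
    set v : Set (Fin (m + 1) → ℝ) := {c | ∀ᶠ x in nhds c, x ∈ U ∧ N x ≠ N s₁} with hv
    have huopen : IsOpen u := isOpen_setOf_eventually_nhds
    have hvopen : IsOpen v := isOpen_setOf_eventually_nhds
    have hcover : S ⊆ u ∪ v := by
      intro c hc
      have hcU : c ∈ U := hSU hc
      have hev : ∀ᶠ x in nhds c, x ∈ U ∧ N x = N c := by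
        have h1 := hloc c hcU
        have h2 : ∀ᶠ x in nhds c, x ∈ U := hUopen.mem_nhds hcU
        filter_upwards [h1, h2] with x hx1 hx2
        exact ⟨hx2, hx1 hx2⟩
      by_cases hNc : N c = N s₁
      · left
        rw [hu]
        filter_upwards [hev] with x hx
        exact ⟨hx.1, hx.2.trans hNc⟩
      · right
        rw [hv]
        filter_upwards [hev] with x hx
        exact ⟨hx.1, hx.2 ▸ hNc⟩
    have hs₁u : s₁ ∈ S ∩ u := by
      constructor
      · exact mem_connectedComponentIn h₁
      · rw [hu]
        have h1 := hloc s₁ h₁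
        have h2 : ∀ᶠ x in nhds s₁, x ∈ U := hUopen.mem_nhds h₁
        filter_upwards [h1, h2] with x hx1 hx2
        exact ⟨hx2, hx1 hx2⟩
    have hdisj : ¬ (S ∩ (u ∩ v)).Nonempty := by
      rintro ⟨c, _, hcu, hcv⟩
      rw [hu] at hcu
      rw [hv] at hcv
      obtain ⟨x, hx1, hx2⟩ := (hcu.and hcv).exists
      exact hx2.2 hx1.2
    have hs₂ : s₂ ∈ u := by
      by_contra hs₂v
      have : s₂ ∈ u ∪ v := hcover h₂
      have hs₂v' : s₂ ∈ v := this.resolve_left hs₂v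
      exact hdisj (hSpre u v huopen hvopen hcover ⟨s₁, hs₁u⟩ ⟨s₂, h₂, hs₂v'⟩)
    have hNs₂ : N s₂ = N s₁ := (hs₂.self_of_nhds).2
    have hP₁ : paramPoly m s₁ ≠ 0 :=
      Aux14.paramPoly_ne_zero m s₁ (Aux14.leading_ne_zero_of_res m hm s₁ h₁)
    have hs₂U : s₂ ∈ U := hSU h₂
    have hP₂ : paramPoly m s₂ ≠ 0 :=
      Aux14.paramPoly_ne_zero m s₂ (Aux14.leading_ne_zero_of_res m hm s₂ hs₂U)
    rw [Aux14.card_real_roots m s₁ hP₁, Aux14.card_real_roots m s₂ hP₂]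
    exact (hNs₂.symm : N s₁ = N s₂)
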